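/- Fix λ ∈ ℝ and T > 0. There exist constants C > 0 and h₀ > 0, both independent of ε and h, such that for every ε ∈ ℝ and every integer N ≥ 1 with h = T/N ≤ h₀, the function φ(y) = cos(X̄(N;y)) satisfies |E[cos(X̄(N;ζ))] − A(2,N)φ| ≤ C ε⁴ (1 + e^{4Tλ}), where ζ = (ζ_1,…,ζ_N) are i.i.d. Rademacher variables and A(2,N) is the level-2 Smolyak sparse grid quadrature built from one-dimensional Gauss–Hermite rules. -/
import Mathlib


open MeasureTheory ProbabilityTheory Finset

noncomputable section

/-- Evaluation of the probabilists' Hermite polynomial `H_n`. -/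
def hermiteEval (n : ℕ) (y : ℝ) : ℝ := Polynomial.aeval y (Polynomial.hermite n)

/-- One-dimensional quadrature `Q_n ψ = ∑ ψ(y_{n,α}) w_{n,α}` with prescribed nodes and weights
(in particular `Q_0 = 0`). -/
def ghQuad (node weight : (n : ℕ) → Fin n → ℝ) (n : ℕ) (ψ : ℝ → ℝ) : ℝ :=
  ∑ α : Fin n, ψ (node n α) * weight n α

/-- `node`/`weight` are the Gauss–Hermite nodes (the increasing enumeration of the `n` roots of
the probabilists' Hermite polynomial `H_n`) together with the Gauss–Hermite weights
`w_{n,α} = n! / (n² H_{n-1}(y_{n,α})²)`. -/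
def IsGaussHermite (node weight : (n : ℕ) → Fin n → ℝ) : Prop :=
  (∀ n : ℕ, StrictMono (node n)) ∧
  (∀ (n : ℕ) (α : Fin n), hermiteEval n (node n α) = 0) ∧
  (∀ (n : ℕ) (α : Fin n),
    weight n α = (Nat.factorial n : ℝ) / ((n : ℝ) ^ 2 * hermiteEval (n - 1) (node n α) ^ 2))

/-- Standard Gaussian integral `I₁ ψ = (2π)^{-1/2} ∫ ψ(y) e^{-y²/2} dy`. -/
def gaussInt (ψ : ℝ → ℝ) : ℝ := ∫ y, ψ y ∂(gaussianReal 0 1)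

/-- `N`-dimensional standard Gaussian integral `I_N φ`. -/
def gaussIntN (N : ℕ) (φ : (Fin N → ℝ) → ℝ) : ℝ :=
  ∫ y, φ y ∂(MeasureTheory.Measure.pi fun _ : Fin N => gaussianReal 0 1)

/-- Apply a one-dimensional functional `T` in the `k`-th coordinate of a function of `N`
variables. -/
def applyCoord {N : ℕ} (T : (ℝ → ℝ) → ℝ) (k : Fin N) (φ : (Fin N → ℝ) → ℝ) :
    (Fin N → ℝ) → ℝ :=
  fun y => T fun t => φ (Function.update y k t)

/-- Tensor product `T_1 ⊗ ⋯ ⊗ T_N` of one-dimensional functionals, applied to `φ`. -/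
def tensorApply {N : ℕ} (T : Fin N → ((ℝ → ℝ) → ℝ)) (φ : (Fin N → ℝ) → ℝ) : ℝ :=
  ((List.finRange N).foldr (fun k ψ => applyCoord (T k) k ψ) φ) fun _ => 0

/-- The level-`L` Smolyak sparse grid quadrature
`A(L,d)φ = ∑_{d ≤ |i| ≤ L+d-1} (Q_{i_1}-Q_{i_1-1}) ⊗ ⋯ ⊗ (Q_{i_d}-Q_{i_d-1}) φ`
(each `i_k ≥ 1`; note that the constraints force `i_k ≤ L`, so summing over
`i : Fin d → Fin (L+2)` loses no terms). -/
def smolyak (node weight : (n : ℕ) → Fin n → ℝ) (L d : ℕ) (φ : (Fin d → ℝ) → ℝ) : ℝ :=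
  ∑ i : Fin d → Fin (L + 2),
    if (∀ k, 1 ≤ (i k : ℕ)) ∧ d ≤ (∑ k, (i k : ℕ)) ∧ (∑ k, (i k : ℕ)) ≤ L + d - 1 then
      tensorApply
        (fun k ψ => ghQuad node weight (i k : ℕ) ψ - ghQuad node weight ((i k : ℕ) - 1) ψ) φ
    else 0

/-- The Peano kernel `Γ_{y,γ}(z) = (z-y)^{γ-1}/(γ-1)!` for `z ≥ y`, `0` otherwise. -/
def peanoKernel (y : ℝ) (γ : ℕ) : ℝ → ℝ :=
  fun z => if y ≤ z then (z - y) ^ (γ - 1) / (Nat.factorial (γ - 1) : ℝ) else 0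

/-- The Gauss–Hermite quadrature error on the Peano kernel, `R_{n,γ}(Γ_{y,γ})`. -/
def ghErr (node weight : (n : ℕ) → Fin n → ℝ) (n γ : ℕ) (y : ℝ) : ℝ :=
  ghQuad node weight n (peanoKernel y γ) - gaussInt (peanoKernel y γ)

/-- Euler scheme `X̄(N;y) = (1+λh)^N + ∑_{j=1}^N (1+λh)^{N-j} ε √h y_j` for
`dX = λX dt + ε dw`, `X(0) = 1`. -/
def eulerX (lam eps h : ℝ) (N : ℕ) (y : Fin N → ℝ) : ℝ :=
  (1 + lam * h) ^ N +
    ∑ j : Fin N, (1 + lam * h) ^ (N - ((j : ℕ) + 1)) * eps * Real.sqrt h * y j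

/-- Expectation over `d` i.i.d. Rademacher variables: `E g(ζ) = 2^{-d} ∑_{s ∈ {-1,1}^d} g(s)`. -/
def radExp (d : ℕ) (g : (Fin d → ℝ) → ℝ) : ℝ :=
  (1 / 2 ^ d) * ∑ s : Fin d → Bool, g fun k => if s k then 1 else -1

/-- Expectation over `d` i.i.d. variables with `P(ζ = ±√3) = 1/6`, `P(ζ = 0) = 2/3`. -/
def threePointExp (d : ℕ) (g : (Fin d → ℝ) → ℝ) : ℝ :=
  ∑ s : Fin d → Fin 3,
    (∏ k, ![(1 : ℝ) / 6, 2 / 3, 1 / 6] (s k)) *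
      g fun k => ![Real.sqrt 3, 0, -Real.sqrt 3] (s k)

/-- Partial derivative in the `k`-th coordinate. -/
def pderivCoord {d : ℕ} (k : Fin d) (φ : (Fin d → ℝ) → ℝ) : (Fin d → ℝ) → ℝ :=
  fun y => deriv (fun t => φ (Function.update y k t)) (y k)

/-- Mixed partial derivative `D^α` for a multi-index `α`. -/
def mderiv {d : ℕ} (α : Fin d → ℕ) (φ : (Fin d → ℝ) → ℝ) : (Fin d → ℝ) → ℝ :=
  (List.finRange d).foldr (fun k ψ => (pderivCoord k)^[α k] ψ) φ

end
section GH
variable (node weight : (n : ℕ) → Fin n → ℝ) (hGH : IsGaussHermite node weight)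

lemma hermiteEval_zero (x : ℝ) : hermiteEval 0 x = 1 := by
  simp [hermiteEval, Polynomial.hermite_zero]

lemma hermiteEval_one (x : ℝ) : hermiteEval 1 x = x := by
  simp [hermiteEval, Polynomial.hermite_one]

lemma hermiteEval_two (x : ℝ) : hermiteEval 2 x = x ^ 2 - 1 := by
  simp [hermiteEval, Polynomial.hermite_succ, Polynomial.hermite_one, Polynomial.hermite_zero]
  ring

include hGH

lemma ghQuad_zero (ψ : ℝ → ℝ) : ghQuad node weight 0 ψ = 0 := by
  simp [ghQuad]

lemma node_one : node 1 0 = 0 := by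
  have := hGH.2.1 1 0
  rwa [hermiteEval_one] at this

lemma ghQuad_one (ψ : ℝ → ℝ) : ghQuad node weight 1 ψ = ψ 0 := by
  have hw := hGH.2.2 1 0
  rw [hermiteEval_zero] at hw
  simp [ghQuad, node_one node weight hGH, hw, Nat.factorial]

lemma node_two_vals (α : Fin 2) : node 2 α = 1 ∨ node 2 α = -1 := by
  have := hGH.2.1 2 α
  rw [hermiteEval_two] at this
  have : (node 2 α - 1) * (node 2 α + 1) = 0 := by ring_nf; linarith [this]
  rcases mul_eq_zero.1 this with h | h
  · left; linarith
  · right; linarith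

lemma node_two_0 : node 2 0 = -1 ∧ node 2 1 = 1 := by
  have hm : node 2 0 < node 2 1 := hGH.1 2 (by decide : (0 : Fin 2) < 1)
  rcases node_two_vals node weight hGH 0 with h0 | h0 <;>
    rcases node_two_vals node weight hGH 1 with h1 | h1 <;>
    simp_all <;> linarith

lemma ghQuad_two (ψ : ℝ → ℝ) : ghQuad node weight 2 ψ = (ψ 1 + ψ (-1)) / 2 := by
  obtain ⟨h0, h1⟩ := node_two_0 node weight hGH
  have hw0 := hGH.2.2 2 0
  have hw1 := hGH.2.2 2 1
  rw [h0, hermiteEval_one] at hw0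
  rw [h1, hermiteEval_one] at hw1
  rw [ghQuad, Fin.sum_univ_two, h0, h1, hw0, hw1]
  norm_num [Nat.factorial]
  ring

end GH

section Foldr
variable {N : ℕ}

lemma foldr_point (T : Fin N → (ℝ → ℝ) → ℝ) (hT : ∀ k ψ, T k ψ = ψ 0)
    (l : List (Fin N)) (φ : (Fin N → ℝ) → ℝ) (y : Fin N → ℝ) :
    (l.foldr (fun k ψ => applyCoord (T k) k ψ) φ) y
      = φ (fun j => if j ∈ l then 0 else y j) := by
  induction l generalizing y with
  | nil => simp
  | cons k l ih =>
    simp only [List.foldr_cons, applyCoord, hT]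
    rw [ih]
    congr 1
    funext j
    by_cases hjl : j ∈ l <;> by_cases hjk : j = k <;>
      simp [hjl, hjk, Function.update_apply, List.mem_cons]

lemma foldr_mixed (k₀ : Fin N) (T : Fin N → (ℝ → ℝ) → ℝ)
    (hT₀ : ∀ ψ, T k₀ ψ = (ψ 1 + ψ (-1)) / 2 - ψ 0)
    (hT : ∀ k, k ≠ k₀ → ∀ ψ, T k ψ = ψ 0)
    (l : List (Fin N)) (hl : l.Nodup) (φ : (Fin N → ℝ) → ℝ) (y : Fin N → ℝ) :
    (l.foldr (fun k ψ => applyCoord (T k) k ψ) φ) y =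
      if k₀ ∈ l then
        ((φ (fun j => if j ∈ l then (if j = k₀ then 1 else 0) else y j)
          + φ (fun j => if j ∈ l then (if j = k₀ then -1 else 0) else y j)) / 2
          - φ (fun j => if j ∈ l then 0 else y j))
      else φ (fun j => if j ∈ l then 0 else y j) := by
  induction l generalizing y with
  | nil => simp
  | cons k l ih =>
    obtain ⟨hknl, hl'⟩ := List.nodup_cons.1 hl
    by_cases hk : k₀ = k
    · subst hk
      simp only [List.foldr_cons, applyCoord, hT₀]
      have hnmem : k₀ ∉ l := hknl
      rw [ih hl' (Function.update y k₀ 1), ih hl' (Function.update y k₀ (-1)),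
        ih hl' (Function.update y k₀ 0)]
      simp only [hnmem, if_neg hnmem, List.mem_cons, true_or, if_pos, if_true]
      have key : ∀ t : ℝ, (fun j => if j ∈ l then 0 else Function.update y k₀ t j)
          = fun j => if j ∈ k₀ :: l then (if j = k₀ then t else 0) else y j := by
        intro t; funext j
        by_cases hjl : j ∈ l <;> by_cases hjk : j = k₀ <;>
          simp_all [Function.update_apply, List.mem_cons]
      rw [key 1, key (-1), key 0]
      simp
    · have hk1 : k ≠ k₀ := fun h => hk h.symm
      simp only [List.foldr_cons, applyCoord, hT k hk1]
      rw [ih hl' (Function.update y k 0)]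
      have key : ∀ t : ℝ, (fun j => if j ∈ l then (if j = k₀ then t else 0)
            else Function.update y k 0 j)
          = fun j => if j ∈ k :: l then (if j = k₀ then t else 0) else y j := by
        intro t; funext j
        by_cases hjl : j ∈ l <;> by_cases hjk : j = k <;>
          simp_all [Function.update_apply, List.mem_cons]
      have key0 : (fun j => if j ∈ l then 0 else Function.update y k 0 j)
          = fun j => if j ∈ k :: l then 0 else y j := by
        funext j
        by_cases hjl : j ∈ l <;> by_cases hjk : j = k <;>
          simp_all [Function.update_apply, List.mem_cons]
      rw [key 1, key (-1)]
      by_cases hin : k₀ ∈ l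
      · rw [if_pos hin, if_pos (by simp [List.mem_cons, hin]), key0]
      · rw [if_neg hin, if_neg (by simp [List.mem_cons, hin, hk]), key0]

end Foldr

section Smolyak

/-- Index map: `none ↦ (1,…,1)`, `some k₀ ↦ (1,…,2,…,1)` with `2` at `k₀`. -/
def gOpt {N : ℕ} : Option (Fin N) → (Fin N → Fin 4)
  | none => fun _ => ⟨1, by norm_num⟩
  | some k₀ => fun j => if j = k₀ then ⟨2, by norm_num⟩ else ⟨1, by norm_num⟩

lemma gOpt_inj {N : ℕ} : Function.Injective (gOpt (N := N)) := by
  intro o o' h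
  match o, o' with
  | none, none => rfl
  | none, some k => exact absurd (congrFun h k) (by simp [gOpt])
  | some k, none => exact absurd (congrFun h k) (by simp [gOpt])
  | some k, some k' =>
    by_cases hkk : k = k'
    · rw [hkk]
    · exact absurd (congrFun h k) (by simp [gOpt, hkk])

lemma sum_gOpt_some {N : ℕ} (k₀ : Fin N) : (∑ k, (gOpt (some k₀) k : ℕ)) = N + 1 := by
  have : ∀ k : Fin N, (gOpt (some k₀) k : ℕ) = (if k = k₀ then 1 else 0) + 1 := by
    intro k; by_cases h : k = k₀ <;> simp [gOpt, h]
  simp [this, Finset.sum_add_distrib, Finset.sum_ite_eq', add_comm]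

lemma cond_iff {N : ℕ} (i : Fin N → Fin 4) :
    ((∀ k, 1 ≤ (i k : ℕ)) ∧ N ≤ (∑ k, (i k : ℕ)) ∧ (∑ k, (i k : ℕ)) ≤ 2 + N - 1)
      ↔ ∃ o : Option (Fin N), gOpt o = i := by
  constructor
  · rintro ⟨h1, h2, h3⟩
    by_cases hex : ∃ k₀, 2 ≤ (i k₀ : ℕ)
    · obtain ⟨k₀, hk₀⟩ := hex
      refine ⟨some k₀, funext fun j => ?_⟩
      have hNcard : (Finset.univ : Finset (Fin N)).card = N := by simp
      have herase : ∀ j : Fin N, (N - 1 : ℕ) ≤ ∑ k ∈ Finset.univ.erase j, (i k : ℕ) := by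
        intro j
        have hcard : (Finset.univ.erase j).card = N - 1 := by
          rw [Finset.card_erase_of_mem (Finset.mem_univ j), hNcard]
        have hle : (Finset.univ.erase j).card ≤ ∑ k ∈ Finset.univ.erase j, (i k : ℕ) := by
          rw [Finset.card_eq_sum_ones]; exact Finset.sum_le_sum (fun k _ => h1 k)
        omega
      have hsplit : (i k₀ : ℕ) + ∑ k ∈ Finset.univ.erase k₀, (i k : ℕ)
          = ∑ k, (i k : ℕ) :=
        Finset.add_sum_erase _ (fun k => (i k : ℕ)) (Finset.mem_univ k₀)
      have hN1 : 1 ≤ N := Fin.pos k₀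
      have heK := herase k₀
      have hik₀ : (i k₀ : ℕ) = 2 := by omega
      by_cases hj : j = k₀
      · subst hj
        simp only [gOpt, if_pos rfl]
        refine (Fin.ext ?_).symm
        show (i j : ℕ) = 2
        omega
      · have hsplit2 : (i j : ℕ) + ∑ k ∈ (Finset.univ.erase k₀).erase j, (i k : ℕ)
            = ∑ k ∈ Finset.univ.erase k₀, (i k : ℕ) :=
          Finset.add_sum_erase _ (fun k => (i k : ℕ)) (Finset.mem_erase.2 ⟨hj, Finset.mem_univ j⟩)
        have herase2 : (N - 2 : ℕ) ≤ ∑ k ∈ (Finset.univ.erase k₀).erase j, (i k : ℕ) := by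
          have hcard : ((Finset.univ.erase k₀).erase j).card = N - 1 - 1 := by
            rw [Finset.card_erase_of_mem (Finset.mem_erase.2 ⟨hj, Finset.mem_univ j⟩),
              Finset.card_erase_of_mem (Finset.mem_univ k₀), hNcard]
          have hle : ((Finset.univ.erase k₀).erase j).card
              ≤ ∑ k ∈ (Finset.univ.erase k₀).erase j, (i k : ℕ) := by
            rw [Finset.card_eq_sum_ones]; exact Finset.sum_le_sum (fun k _ => h1 k)
          omega
        have h1j := h1 j
        have hij : (i j : ℕ) = 1 := by omega
        simp only [gOpt, if_neg hj]
        refine (Fin.ext ?_).symm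
        show (i j : ℕ) = 1
        omega
    · push_neg at hex
      refine ⟨none, funext fun j => ?_⟩
      have := h1 j
      have := hex j
      simp only [gOpt]
      refine (Fin.ext ?_).symm
      show (i j : ℕ) = 1
      omega
  · rintro ⟨o, rfl⟩
    match o with
    | none =>
      have hones : ∀ k : Fin N, (gOpt (none : Option (Fin N)) k : ℕ) = 1 := fun _ => rfl
      have hsum : (∑ k, (gOpt (none : Option (Fin N)) k : ℕ)) = N := by
        simp [hones]
      refine ⟨fun k => (hones k).ge, ?_, ?_⟩ <;> rw [hsum] <;> omega
    | some k₀ =>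
      have hN1 : 1 ≤ N := Fin.pos k₀
      refine ⟨fun k => ?_, ?_, ?_⟩
      · by_cases h : k = k₀ <;> simp [gOpt, h]
      · rw [sum_gOpt_some]; omega
      · rw [sum_gOpt_some]; omega

lemma smolyak_two (node weight : (n : ℕ) → Fin n → ℝ) (hGH : IsGaussHermite node weight)
    (N : ℕ) (φ : (Fin N → ℝ) → ℝ) :
    smolyak node weight 2 N φ =
      φ (fun _ => 0) + ∑ k₀ : Fin N,
        ((φ (fun j => if j = k₀ then 1 else 0) + φ (fun j => if j = k₀ then -1 else 0)) / 2
          - φ (fun _ => 0)) := by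
  rw [smolyak, ← Finset.sum_filter]
  have hset : Finset.univ.filter (fun i : Fin N → Fin 4 =>
      (∀ k, 1 ≤ (i k : ℕ)) ∧ N ≤ (∑ k, (i k : ℕ)) ∧ (∑ k, (i k : ℕ)) ≤ 2 + N - 1)
      = Finset.image gOpt Finset.univ := by
    ext i
    simp only [Finset.mem_filter, Finset.mem_image, Finset.mem_univ, true_and]
    rw [cond_iff]
  rw [hset, Finset.sum_image (fun a _ b _ h => gOpt_inj h), Fintype.sum_option]
  congr 1
  · -- all-ones term
    rw [tensorApply]
    have hT : ∀ (k : Fin N) (ψ : ℝ → ℝ),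
        (ghQuad node weight ((gOpt none k : ℕ)) ψ
          - ghQuad node weight ((gOpt none k : ℕ) - 1) ψ) = ψ 0 := by
      intro k ψ
      simp only [gOpt]
      norm_num [ghQuad_one node weight hGH, ghQuad_zero node weight hGH]
    rw [foldr_point _ hT]
    congr 1; funext j; simp [List.mem_finRange]
  · -- mixed terms
    refine Finset.sum_congr rfl fun k₀ _ => ?_
    rw [tensorApply]
    have hT₀ : ∀ ψ : ℝ → ℝ,
        (ghQuad node weight ((gOpt (some k₀) k₀ : ℕ)) ψ
          - ghQuad node weight ((gOpt (some k₀) k₀ : ℕ) - 1) ψ)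
        = (ψ 1 + ψ (-1)) / 2 - ψ 0 := by
      intro ψ
      simp only [gOpt, if_pos rfl]
      norm_num [ghQuad_two node weight hGH, ghQuad_one node weight hGH]
    have hT : ∀ k : Fin N, k ≠ k₀ → ∀ ψ : ℝ → ℝ,
        (ghQuad node weight ((gOpt (some k₀) k : ℕ)) ψ
          - ghQuad node weight ((gOpt (some k₀) k : ℕ) - 1) ψ) = ψ 0 := by
      intro k hk ψ
      simp only [gOpt, if_neg hk]
      norm_num [ghQuad_one node weight hGH, ghQuad_zero node weight hGH]
    rw [foldr_mixed k₀ _ hT₀ hT _ (List.nodup_finRange N)]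
    rw [if_pos (List.mem_finRange k₀)]
    have e : ∀ t : ℝ, (fun j => if j ∈ List.finRange N then (if j = k₀ then t else 0)
        else (fun _ : Fin N => (0:ℝ)) j) = fun j => if j = k₀ then t else 0 := by
      intro t; funext j; simp [List.mem_finRange]
    have e0 : (fun j => if j ∈ List.finRange N then (0:ℝ)
        else (fun _ : Fin N => (0:ℝ)) j) = fun _ : Fin N => (0:ℝ) := by
      funext j; simp [List.mem_finRange]
    rw [e 1, e (-1), e0]

end Smolyak

section Main

lemma one_sub_cos_le (x : ℝ) : 1 - Real.cos x ≤ x ^ 2 / 2 := by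
  have h := Real.sin_sq_le_sq (x := x / 2)
  have hc := Real.cos_sq (x / 2)
  rw [show 2 * (x / 2) = x by ring] at hc
  nlinarith [Real.sin_sq_add_cos_sq (x / 2)]

lemma sum_cos_bool : ∀ (N : ℕ) (a : ℝ) (b : Fin N → ℝ),
    (∑ s : Fin N → Bool, Real.cos (a + ∑ j, b j * (if s j then (1 : ℝ) else -1)))
      = 2 ^ N * (Real.cos a * ∏ j, Real.cos (b j)) := by
  intro N
  induction N with
  | zero =>
    intro a b
    simp
  | succ n ih =>
    intro a b
    rw [← Equiv.sum_comp (Fin.consEquiv (fun _ : Fin (n + 1) => Bool))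
      (fun s => Real.cos (a + ∑ j, b j * (if s j then (1 : ℝ) else -1)))]
    rw [Fintype.sum_prod_type]
    have hinner : ∀ (t : Bool) (s : Fin n → Bool),
        Real.cos (a + ∑ j, b j *
          (if (Fin.consEquiv (fun _ : Fin (n + 1) => Bool)) (t, s) j then (1 : ℝ) else -1))
        = Real.cos ((a + b 0 * (if t then (1:ℝ) else -1))
            + ∑ j : Fin n, b j.succ * (if s j then (1 : ℝ) else -1)) := by
      intro t s
      congr 1
      rw [Fin.sum_univ_succ]
      simp only [Fin.consEquiv, Equiv.coe_fn_mk, Fin.cons_zero, Fin.cons_succ]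
      ring
    simp only [hinner]
    have hsb : ∀ t : Bool,
        (∑ s : Fin n → Bool, Real.cos ((a + b 0 * (if t then (1:ℝ) else -1))
          + ∑ j : Fin n, b j.succ * (if s j then (1 : ℝ) else -1)))
        = 2 ^ n * (Real.cos (a + b 0 * (if t then (1:ℝ) else -1))
            * ∏ j : Fin n, Real.cos (b j.succ)) := fun t => ih _ _
    rw [Fintype.sum_bool, hsb true, hsb false, Fin.prod_univ_succ]
    have h1 : a + b 0 * (if true then (1:ℝ) else -1) = a + b 0 := by simp
    have h2 : a + b 0 * (if false then (1:ℝ) else -1) = a - b 0 := by simp; ring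
    rw [h1, h2, Real.cos_add, Real.cos_sub]
    ring

lemma radExp_cos (N : ℕ) (a : ℝ) (b : Fin N → ℝ) :
    radExp N (fun s => Real.cos (a + ∑ j, b j * s j))
      = Real.cos a * ∏ j, Real.cos (b j) := by
  rw [radExp]
  simp only []
  rw [sum_cos_bool N a b]
  have : (2:ℝ) ^ N ≠ 0 := by positivity
  field_simp

lemma abs_prod_bound {ι : Type*} [DecidableEq ι] (s : Finset ι) (u : ι → ℝ)
    (hu : ∀ k, |1 + u k| ≤ 1) :
    |(∏ k ∈ s, (1 + u k)) - 1| ≤ ∑ k ∈ s, |u k| ∧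
    |(∏ k ∈ s, (1 + u k)) - 1 - ∑ k ∈ s, u k| ≤ (∑ k ∈ s, |u k|) ^ 2 := by
  induction s using Finset.induction_on with
  | empty => simp
  | @insert a s ha ih =>
    obtain ⟨ih1, ih2⟩ := ih
    rw [Finset.prod_insert ha, Finset.sum_insert ha, Finset.sum_insert ha]
    have hA : (0:ℝ) ≤ ∑ k ∈ s, |u k| := Finset.sum_nonneg fun k _ => abs_nonneg _
    constructor
    · have e : (1 + u a) * (∏ k ∈ s, (1 + u k)) - 1
          = (1 + u a) * ((∏ k ∈ s, (1 + u k)) - 1) + u a := by ring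
      rw [e]
      refine (abs_add_le _ _).trans ?_
      rw [abs_mul]
      nlinarith [abs_nonneg ((∏ k ∈ s, (1 + u k)) - 1), hu a, abs_nonneg (1 + u a),
        abs_nonneg (u a)]
    · have e : (1 + u a) * (∏ k ∈ s, (1 + u k)) - 1 - (u a + ∑ k ∈ s, u k)
          = ((∏ k ∈ s, (1 + u k)) - 1 - ∑ k ∈ s, u k)
            + u a * ((∏ k ∈ s, (1 + u k)) - 1) := by ring
      rw [e]
      refine (abs_add_le _ _).trans ?_
      rw [abs_mul]
      nlinarith [abs_nonneg (u a), abs_nonneg ((∏ k ∈ s, (1 + u k)) - 1),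
        mul_le_mul_of_nonneg_left ih1 (abs_nonneg (u a))]

end Main

/-- there exist `C > 0` and `h₀ > 0`, independent of `ε` and `h`, such that for
`φ(y) = cos(X̄(N;y))` and all `h = T/N ≤ h₀`,
`|E[cos X̄(N;ζ)] - A(2,N)φ| ≤ C ε⁴ (1 + e^{4Tλ})`. -/
theorem smolyak_cos_bound (node weight : (n : ℕ) → Fin n → ℝ)
    (hGH : IsGaussHermite node weight) (lam T : ℝ) (hT : 0 < T) :
    ∃ C > (0 : ℝ), ∃ h₀ > (0 : ℝ), ∀ eps : ℝ, ∀ N : ℕ, 1 ≤ N → T / N ≤ h₀ →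
      |radExp N (fun s => Real.cos (eulerX lam eps (T / N) N s)) -
          smolyak node weight 2 N (fun y => Real.cos (eulerX lam eps (T / N) N y))| ≤
        C * eps ^ 4 * (1 + Real.exp (4 * T * lam)) := by
  refine ⟨T ^ 2 / 2 + 1, by positivity, 1 / (1 + |lam|), by positivity, ?_⟩
  intro eps N hN hle
  set h : ℝ := T / N with hh
  have hNpos : (0 : ℝ) < N := by exact_mod_cast hN
  have hhpos : 0 < h := div_pos hT hNpos
  have hpos : 0 ≤ h := hhpos.le
  set a : ℝ := (1 + lam * h) ^ N with ha
  set b : Fin N → ℝ := fun j => (1 + lam * h) ^ (N - ((j : ℕ) + 1)) * eps * Real.sqrt h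
    with hb
  have hEuler : ∀ y : Fin N → ℝ, eulerX lam eps h N y = a + ∑ j, b j * y j := fun y => rfl
  have hrad : radExp N (fun s => Real.cos (eulerX lam eps h N s))
      = Real.cos a * ∏ j, Real.cos (b j) := by
    have e : (fun s : Fin N → ℝ => Real.cos (eulerX lam eps h N s))
        = fun s => Real.cos (a + ∑ j, b j * s j) := by funext s; rw [hEuler]
    rw [e, radExp_cos]
  have hδ : ∀ (k₀ : Fin N) (t : ℝ), (∑ j, b j * (if j = k₀ then t else 0)) = b k₀ * t := by
    intro k₀ t
    rw [Finset.sum_congr rfl (fun j _ => by rw [mul_ite, mul_zero])]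
    rw [Finset.sum_ite_eq' Finset.univ k₀ (fun j => b j * t)]
    simp
  have hsmol : smolyak node weight 2 N (fun y => Real.cos (eulerX lam eps h N y))
      = Real.cos a * (1 + ∑ k, (Real.cos (b k) - 1)) := by
    rw [smolyak_two node weight hGH]
    have e0 : Real.cos (eulerX lam eps h N (fun _ => 0)) = Real.cos a := by
      rw [hEuler]; simp
    have et : ∀ (k₀ : Fin N) (t : ℝ),
        Real.cos (eulerX lam eps h N (fun j => if j = k₀ then t else 0))
          = Real.cos (a + b k₀ * t) := by
      intro k₀ t; rw [hEuler, hδ]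
    simp only [e0, et]
    have e1 : ∀ k : Fin N,
        (Real.cos (a + b k * 1) + Real.cos (a + b k * (-1))) / 2 - Real.cos a
          = Real.cos a * (Real.cos (b k) - 1) := by
      intro k
      rw [mul_one, show a + b k * (-1) = a - b k by ring, Real.cos_add, Real.cos_sub]
      ring
    rw [Finset.sum_congr rfl (fun k _ => e1 k), ← Finset.mul_sum]
    ring
  -- error representation
  have hub : ∀ k : Fin N, |1 + (Real.cos (b k) - 1)| ≤ 1 := by
    intro k
    rw [show (1 : ℝ) + (Real.cos (b k) - 1) = Real.cos (b k) by ring]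
    exact Real.abs_cos_le_one _
  obtain ⟨-, hkey⟩ := abs_prod_bound Finset.univ (fun k => Real.cos (b k) - 1) hub
  have hprod : (∏ j, Real.cos (b j)) = ∏ j : Fin N, (1 + (Real.cos (b j) - 1)) :=
    Finset.prod_congr rfl (fun j _ => by ring)
  have hdiff : radExp N (fun s => Real.cos (eulerX lam eps h N s))
        - smolyak node weight 2 N (fun y => Real.cos (eulerX lam eps h N y))
      = Real.cos a * ((∏ j : Fin N, (1 + (Real.cos (b j) - 1))) - 1
          - ∑ k : Fin N, (Real.cos (b k) - 1)) := by
    rw [hrad, hsmol, hprod]; ring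
  rw [hdiff, abs_mul]
  -- bound on the base
  have hb0 : 0 ≤ 1 + lam * h := by
    have h1 : |lam| * h ≤ |lam| * (1 / (1 + |lam|)) :=
      mul_le_mul_of_nonneg_left hle (abs_nonneg lam)
    have h2 : |lam| * (1 / (1 + |lam|)) ≤ 1 := by
      rw [mul_one_div, div_le_one (by positivity)]; linarith [abs_nonneg lam]
    have h3 := neg_abs_le (lam * h)
    rw [abs_mul, abs_of_nonneg hpos] at h3
    linarith
  have hNh : (N : ℝ) * h = T := by
    rw [hh]; field_simp
  have hexp : ∀ m : ℕ, m ≤ N → ((1 + lam * h) ^ m) ^ 2 ≤ 1 + Real.exp (2 * T * lam) := by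
    intro m hm
    have hpe : (1 + lam * h) ^ m ≤ Real.exp (lam * h) ^ m :=
      pow_le_pow_left₀ hb0 (by linarith [Real.add_one_le_exp (lam * h)]) m
    have hpe2 : ((1 + lam * h) ^ m) ^ 2 ≤ (Real.exp (lam * h) ^ m) ^ 2 :=
      pow_le_pow_left₀ (pow_nonneg hb0 m) hpe 2
    have heq : (Real.exp (lam * h) ^ m) ^ 2 = Real.exp ((m * 2 : ℕ) * (lam * h)) := by
      rw [Real.exp_nat_mul, pow_mul]
    calc ((1 + lam * h) ^ m) ^ 2 ≤ (Real.exp (lam * h) ^ m) ^ 2 := hpe2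
      _ = Real.exp ((m * 2 : ℕ) * (lam * h)) := heq
      _ ≤ 1 + Real.exp (2 * T * lam) := by
        rcases le_or_gt 0 lam with hl | hl
        · have hc : ((m * 2 : ℕ) : ℝ) ≤ 2 * (N : ℝ) := by
            push_cast
            have : (m : ℝ) ≤ (N : ℝ) := Nat.cast_le.2 hm
            linarith
          have hlh : 0 ≤ lam * h := mul_nonneg hl hpos
          have h2N : 2 * (N : ℝ) * (lam * h) = 2 * T * lam := by rw [← hNh]; ring
          have hmn : ((m * 2 : ℕ) : ℝ) * (lam * h) ≤ 2 * T * lam := by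
            nlinarith [mul_nonneg (sub_nonneg.2 hc) hlh]
          linarith [Real.exp_le_exp.2 hmn]
        · have hlh : lam * h ≤ 0 := mul_nonpos_of_nonpos_of_nonneg hl.le hpos
          have hmn : ((m * 2 : ℕ) : ℝ) * (lam * h) ≤ 0 :=
            mul_nonpos_of_nonneg_of_nonpos (by positivity) hlh
          have := Real.exp_le_one_iff.2 hmn
          linarith [Real.exp_pos (2 * T * lam)]
  -- bound on |u k|
  have hbk : ∀ k : Fin N, |Real.cos (b k) - 1| ≤ b k ^ 2 / 2 := by
    intro k
    have habs : |Real.cos (b k) - 1| = 1 - Real.cos (b k) := by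
      rw [abs_of_nonpos (by linarith [Real.cos_le_one (b k)])]; ring
    rw [habs]
    exact one_sub_cos_le _
  have hbksq : ∀ k : Fin N, b k ^ 2 ≤ (1 + Real.exp (2 * T * lam)) * (eps ^ 2 * h) := by
    intro k
    have hsq : b k ^ 2 = ((1 + lam * h) ^ (N - ((k : ℕ) + 1))) ^ 2 * (eps ^ 2 * h) := by
      rw [hb]
      simp only []
      rw [mul_pow, mul_pow, Real.sq_sqrt hpos]
      ring
    rw [hsq]
    exact mul_le_mul_of_nonneg_right (hexp _ (by omega)) (by positivity)
  have hA : (∑ k : Fin N, |Real.cos (b k) - 1|)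
      ≤ eps ^ 2 * T * (1 + Real.exp (2 * T * lam)) / 2 := by
    calc (∑ k : Fin N, |Real.cos (b k) - 1|)
        ≤ ∑ _k : Fin N, (1 + Real.exp (2 * T * lam)) * (eps ^ 2 * h) / 2 :=
          Finset.sum_le_sum (fun k _ => (hbk k).trans (by linarith [hbksq k]))
      _ = (N : ℝ) * ((1 + Real.exp (2 * T * lam)) * (eps ^ 2 * h) / 2) := by
          rw [Finset.sum_const, Finset.card_univ, Fintype.card_fin, nsmul_eq_mul]
      _ = eps ^ 2 * T * (1 + Real.exp (2 * T * lam)) / 2 := by rw [← hNh]; ring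
  have hA0 : (0:ℝ) ≤ ∑ k : Fin N, |Real.cos (b k) - 1| :=
    Finset.sum_nonneg fun k _ => abs_nonneg _
  have hsq2 : (∑ k : Fin N, |Real.cos (b k) - 1|) ^ 2
      ≤ (eps ^ 2 * T * (1 + Real.exp (2 * T * lam)) / 2) ^ 2 :=
    pow_le_pow_left₀ hA0 hA 2
  have hexpsq : Real.exp (2 * T * lam) * Real.exp (2 * T * lam) = Real.exp (4 * T * lam) := by
    rw [← Real.exp_add]; ring_nf
  have hcos1 : |Real.cos a| ≤ 1 := Real.abs_cos_le_one a
  have habs0 : (0:ℝ) ≤ |(∏ j : Fin N, (1 + (Real.cos (b j) - 1))) - 1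
      - ∑ k : Fin N, (Real.cos (b k) - 1)| := abs_nonneg _
  have hstep : |Real.cos a| * |(∏ j : Fin N, (1 + (Real.cos (b j) - 1))) - 1
        - ∑ k : Fin N, (Real.cos (b k) - 1)|
      ≤ (∑ k : Fin N, |Real.cos (b k) - 1|) ^ 2 := by
    calc |Real.cos a| * _ ≤ 1 * |(∏ j : Fin N, (1 + (Real.cos (b j) - 1))) - 1
          - ∑ k : Fin N, (Real.cos (b k) - 1)| :=
        mul_le_mul_of_nonneg_right hcos1 habs0
      _ = |(∏ j : Fin N, (1 + (Real.cos (b j) - 1))) - 1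
          - ∑ k : Fin N, (Real.cos (b k) - 1)| := one_mul _
      _ ≤ (∑ k : Fin N, |Real.cos (b k) - 1|) ^ 2 := hkey
  refine hstep.trans (hsq2.trans ?_)
  have hE := Real.exp_pos (2 * T * lam)
  have hE4 := Real.exp_pos (4 * T * lam)
  have he4 : (0:ℝ) ≤ eps ^ 4 := by positivity
  nlinarith [sq_nonneg (1 - Real.exp (2 * T * lam)), sq_nonneg (eps ^ 2 * T),
    mul_nonneg he4 (by positivity : (0:ℝ) ≤ T ^ 2),
    mul_nonneg (mul_nonneg he4 (by positivity : (0:ℝ) ≤ T ^ 2)) hE4.le,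
    mul_nonneg he4 hE4.le,
    mul_nonneg (mul_nonneg he4 (by positivity : (0:ℝ) ≤ T^2)) (sq_nonneg (1 - Real.exp (2*T*lam)))]
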